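/- For every integer k ≥ 1, the graph G_k has pathwidth exactly k + 1. -/

import Mathlib

/-- A path decomposition of a graph `G` with bags `B 0, …, B (n-1)` arranged along a path:
every vertex is in some bag, every edge has both endpoints in a common bag, and the bags
containing any fixed vertex form a contiguous interval. -/
def IsPathDecomp {V : Type*} (G : SimpleGraph V) (n : ℕ) (B : Fin n → Finset V) : Prop :=
  (∀ v : V, ∃ i, v ∈ B i) ∧
  (∀ u v : V, G.Adj u v → ∃ i, u ∈ B i ∧ v ∈ B i) ∧
  (∀ (v : V) (i j l : Fin n), i ≤ j → j ≤ l → v ∈ B i → v ∈ B l → v ∈ B j)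

/-- The pathwidth of `G`: the least `w` such that `G` has a path decomposition
all of whose bags have at most `w + 1` vertices. -/
noncomputable def pathwidth {V : Type*} (G : SimpleGraph V) : ℕ :=
  sInf {w | ∃ (n : ℕ) (B : Fin n → Finset V), IsPathDecomp G n B ∧ ∀ i, (B i).card ≤ w + 1}

/-- The vertices of the graph `G_k`: pairs `(x, y)` with `x ∈ {1, …, k+2}` and
`y ∈ {1, …, 3k+6}`. -/
abbrev GkVert (k : ℕ) : Type :=
  {p : ℕ × ℕ // p ∈ Finset.Icc 1 (k + 2) ×ˢ Finset.Icc 1 (3 * k + 6)}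

/-- The graph `G_k` on `{1, …, k+2} × {1, …, 3k+6}`, with column edges
`{(x,y), (x+1,y)}` for `x ∈ {1, …, k+1}` and row edges `{(x,y), (x,y+1)}`
for `x ∈ {1, …, k}`. -/
def Gk (k : ℕ) : SimpleGraph (GkVert k) :=
  SimpleGraph.fromRel fun p q =>
    (q.val.1 = p.val.1 + 1 ∧ q.val.2 = p.val.2) ∨
    (p.val.1 = q.val.1 ∧ p.val.1 ≤ k ∧ q.val.2 = p.val.2 + 1)


section Helpers

/-- lex comparison helper -/
lemma mulKey {K a b c d : ℕ} (hb : b < K) (hd : d < K) :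
    a * K + b ≤ c * K + d ↔ (a < c ∨ (a = c ∧ b ≤ d)) := by
  constructor
  · intro h
    rcases lt_trichotomy a c with h' | h' | h'
    · exact Or.inl h'
    · exact Or.inr ⟨h', by nlinarith⟩
    · exfalso
      have : c + 1 ≤ a := h'
      have := Nat.mul_le_mul_right K this
      rw [Nat.succ_mul] at this
      omega
  · rintro (h | ⟨rfl, h⟩)
    · have : a + 1 ≤ c := h
      have := Nat.mul_le_mul_right K this
      rw [Nat.succ_mul] at this
      omega
    · omega

lemma flipNat (P : ℕ → Prop) : ∀ {a b : ℕ}, a ≤ b → P a → ¬ P b →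
    ∃ m, a ≤ m ∧ m < b ∧ P m ∧ ¬ P (m + 1) := by
  intro a b
  induction b with
  | zero => intro hab ha hb; interval_cases a; exact absurd ha hb
  | succ b ih =>
    intro hab ha hb
    have hab' : a ≤ b := by
      rcases Nat.lt_or_ge a (b+1) with h | h
      · omega
      · exfalso; have : a = b + 1 := by omega
        exact hb (this ▸ ha)
    by_cases h : P b
    · exact ⟨b, hab', Nat.lt_succ_self b, h, hb⟩
    · obtain ⟨m, h1, h2, h3, h4⟩ := ih hab' ha h
      exact ⟨m, h1, by omega, h3, h4⟩

end Helpers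

section Graph

variable {k : ℕ}

lemma vert_range (v : GkVert k) : 1 ≤ v.1.1 ∧ v.1.1 ≤ k + 2 ∧ 1 ≤ v.1.2 ∧ v.1.2 ≤ 3*k+6 := by
  have := v.2
  rw [Finset.mem_product, Finset.mem_Icc, Finset.mem_Icc] at this
  exact ⟨this.1.1, this.1.2, this.2.1, this.2.2⟩

def mkV (x y : ℕ) (h : 1 ≤ x ∧ x ≤ k + 2 ∧ 1 ≤ y ∧ y ≤ 3*k+6) : GkVert k :=
  ⟨(x, y), by rw [Finset.mem_product, Finset.mem_Icc, Finset.mem_Icc]; exact ⟨⟨h.1, h.2.1⟩, h.2.2.1, h.2.2.2⟩⟩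

@[simp] lemma mkV_fst (x y : ℕ) (h) : (mkV (k := k) x y h).1.1 = x := rfl
@[simp] lemma mkV_snd (x y : ℕ) (h) : (mkV (k := k) x y h).1.2 = y := rfl

lemma adj_vert {u v : GkVert k} (h1 : v.1.1 = u.1.1 + 1) (h2 : u.1.2 = v.1.2) :
    (Gk k).Adj u v := by
  refine ⟨?_, Or.inl (Or.inl ⟨h1, h2.symm⟩)⟩
  intro he
  rw [he] at h1
  omega

lemma adj_horiz {u v : GkVert k} (h1 : u.1.1 = v.1.1) (hle : u.1.1 ≤ k)
    (h2 : v.1.2 = u.1.2 + 1) : (Gk k).Adj u v := by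
  refine ⟨?_, Or.inl (Or.inr ⟨h1, hle, h2⟩)⟩
  intro he
  rw [he] at h2
  omega

lemma adj_cases {u v : GkVert k} (h : (Gk k).Adj u v) :
    (u.1.2 = v.1.2 ∧ (u.1.1 = v.1.1 + 1 ∨ v.1.1 = u.1.1 + 1)) ∨
    (u.1.1 = v.1.1 ∧ u.1.1 ≤ k ∧ (u.1.2 = v.1.2 + 1 ∨ v.1.2 = u.1.2 + 1)) := by
  obtain ⟨-, h⟩ := h
  rcases h with (h | h) | (h | h)
  · exact Or.inl ⟨h.2.symm, Or.inr h.1⟩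
  · exact Or.inr ⟨h.1, h.2.1, Or.inr h.2.2⟩
  · exact Or.inl ⟨h.2, Or.inl h.1⟩
  · exact Or.inr ⟨h.1.symm, h.1 ▸ h.2.1, Or.inl h.2.2⟩

lemma adj_symm' {u v : GkVert k} (h : (Gk k).Adj u v) : (Gk k).Adj v u := h.symm

end Graph

section Upper

variable {k : ℕ}

/-- left end of the bag interval of a vertex -/
def Lidx (k : ℕ) (v : GkVert k) : ℕ :=
  if v.1.1 ≤ k ∧ 2 ≤ v.1.2 then (v.1.2 - 2) * (k+1) + v.1.1 else (v.1.2 - 1) * (k+1)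

/-- right end of the bag interval of a vertex -/
def Ridx (k : ℕ) (v : GkVert k) : ℕ :=
  (v.1.2 - 1) * (k+1) + (if v.1.1 ≤ k then v.1.1 else 0)

open Classical in
noncomputable def Bag (k n : ℕ) (m : Fin n) : Finset (GkVert k) :=
  Finset.univ.filter (fun v => Lidx k v ≤ m.val ∧ m.val ≤ Ridx k v)

lemma mem_Bag_iff {n : ℕ} (v : GkVert k) (m : Fin n) :
    v ∈ Bag k n m ↔ Lidx k v ≤ m.val ∧ m.val ≤ Ridx k v := by
  simp [Bag]

lemma succ_mul_helper (a : ℕ) (h : 2 ≤ a) : (a - 2) * (k+1) + (k+1) = (a-1) * (k+1) := by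
  rw [← Nat.succ_mul]; congr 1; omega

lemma Lidx_le_Ridx (v : GkVert k) : Lidx k v ≤ Ridx k v := by
  obtain ⟨h1, h2, h3, h4⟩ := vert_range v
  unfold Lidx Ridx
  by_cases hx : v.1.1 ≤ k
  · by_cases hy : 2 ≤ v.1.2
    · have := succ_mul_helper (k := k) v.1.2 hy
      simp only [hx, hy, and_true, if_pos trivial, if_pos]
      omega
    · simp [hx, hy]
  · simp [hx]

lemma mem_col_bag (v : GkVert k) :
    Lidx k v ≤ (v.1.2 - 1) * (k+1) ∧ (v.1.2 - 1) * (k+1) ≤ Ridx k v := by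
  obtain ⟨h1, h2, h3, h4⟩ := vert_range v
  constructor
  · unfold Lidx
    split
    · rename_i hc
      have := succ_mul_helper (k := k) v.1.2 hc.2
      omega
    · omega
  · unfold Ridx; omega

lemma Ridx_lt (v : GkVert k) : Ridx k v < (3*k+6) * (k+1) := by
  obtain ⟨h1, h2, h3, h4⟩ := vert_range v
  unfold Ridx
  have hy : v.1.2 - 1 ≤ 3*k+5 := by omega
  have := Nat.mul_le_mul_right (k+1) hy
  have hif : (if v.1.1 ≤ k then v.1.1 else 0) ≤ k := by split <;> omega
  have : (3*k+6) * (k+1) = (3*k+5)*(k+1) + (k+1) := by rw [← Nat.succ_mul]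
  omega

lemma col_bag_lt (v : GkVert k) : (v.1.2 - 1) * (k+1) < (3*k+6) * (k+1) := by
  have := Ridx_lt v
  have := (mem_col_bag v).2
  omega

lemma horiz_cover {u v : GkVert k} (hx : u.1.1 = v.1.1) (hxk : u.1.1 ≤ k)
    (hy : v.1.2 = u.1.2 + 1) :
    ∃ i : Fin ((3*k+6)*(k+1)), u ∈ Bag k _ i ∧ v ∈ Bag k _ i := by
  obtain ⟨h1, h2, h3, h4⟩ := vert_range u
  obtain ⟨g1, g2, g3, g4⟩ := vert_range v
  refine ⟨⟨Ridx k u, Ridx_lt u⟩, ?_, ?_⟩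
  · rw [mem_Bag_iff]
    exact ⟨Lidx_le_Ridx u, le_refl _⟩
  · rw [mem_Bag_iff]
    have hR : Ridx k u = (u.1.2 - 1) * (k+1) + u.1.1 := by
      unfold Ridx; rw [if_pos hxk]
    have hL : Lidx k v = (u.1.2 - 1) * (k+1) + u.1.1 := by
      unfold Lidx
      rw [if_pos ⟨by omega, by omega⟩]
      have : v.1.2 - 2 = u.1.2 - 1 := by omega
      rw [this, hx]
    constructor
    · simp [hR, hL]
    · calc (⟨Ridx k u, Ridx_lt u⟩ : Fin _).val = Lidx k v := by simp [hR, hL]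
        _ ≤ Ridx k v := Lidx_le_Ridx v

lemma upper_decomp : IsPathDecomp (Gk k) ((3*k+6) * (k+1)) (Bag k ((3*k+6)*(k+1))) := by
  refine ⟨?_, ?_, ?_⟩
  · intro v
    exact ⟨⟨Ridx k v, Ridx_lt v⟩, by rw [mem_Bag_iff]; exact ⟨Lidx_le_Ridx v, le_refl _⟩⟩
  · intro u v huv
    rcases adj_cases huv with ⟨hy, _⟩ | ⟨hx, hxk, hy | hy⟩
    · -- vertical edge : bag (Y-1)(k+1)
      refine ⟨⟨(u.1.2 - 1) * (k+1), col_bag_lt u⟩, ?_, ?_⟩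
      · rw [mem_Bag_iff]; exact (mem_col_bag u)
      · rw [mem_Bag_iff]
        have h := mem_col_bag v
        rw [← hy] at h
        exact h
    · obtain ⟨i, h1, h2⟩ := horiz_cover (k := k) hx.symm (hx ▸ hxk) hy
      exact ⟨i, h2, h1⟩
    · exact horiz_cover hx hxk hy
  · intro v i j l hij hjl hi hl
    rw [mem_Bag_iff] at *
    exact ⟨le_trans hi.1 hij, le_trans (Fin.le_def.mp hjl) hl.2⟩

end Upper

section BagCard

variable {k : ℕ}

lemma mem_bag_char {n : ℕ} {m : Fin n} {y i : ℕ} (hm : m.val = y * (k+1) + i)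
    (hi : i < k + 1) {v : GkVert k} (h : v ∈ Bag k n m) :
    (v.1.2 = y + 1 ∧ ((v.1.1 ≤ k ∧ i ≤ v.1.1) ∨ (k + 1 ≤ v.1.1 ∧ i = 0))) ∨
    (v.1.2 = y + 2 ∧ v.1.1 ≤ i ∧ v.1.1 ≤ k) := by
  obtain ⟨h1, h2, h3, h4⟩ := vert_range v
  rw [mem_Bag_iff, hm] at h
  obtain ⟨hL, hR⟩ := h
  unfold Lidx at hL
  unfold Ridx at hR
  by_cases hx : v.1.1 ≤ k
  · rw [if_pos hx] at hR
    by_cases hy2 : 2 ≤ v.1.2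
    · rw [if_pos ⟨hx, hy2⟩] at hL
      rw [mulKey (by omega) hi] at hL
      rw [mulKey hi (by omega)] at hR
      omega
    · rw [if_neg (by tauto)] at hL
      have hy1 : v.1.2 = 1 := by omega
      rw [hy1] at hL hR ⊢
      simp only [Nat.sub_self] at hL hR
      rw [mulKey hi (by omega)] at hR
      omega
  · rw [if_neg (by tauto)] at hL
    rw [if_neg hx] at hR
    have hL' : (v.1.2 - 1) * (k+1) + 0 ≤ y * (k+1) + i := by omega
    rw [mulKey (by omega) hi] at hL'
    rw [mulKey hi (by omega)] at hR
    omega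

lemma bag_card {n : ℕ} (m : Fin n) : (Bag k n m).card ≤ k + 2 := by
  have hm : m.val = (m.val / (k+1)) * (k+1) + m.val % (k+1) :=
    (Nat.div_add_mod' _ _).symm
  have hi : m.val % (k+1) < k + 1 := Nat.mod_lt _ (by omega)
  set y := m.val / (k+1) with hy
  set i := m.val % (k+1) with hidef
  have hcard : (Finset.range (k+2)).card = k + 2 := Finset.card_range _
  rw [← hcard]
  apply Finset.card_le_card_of_injOn
    (fun v => if v.1.2 = y + 2 ∨ i = 0 then v.1.1 - 1 else v.1.1)
  · intro v hv
    have hc := mem_bag_char hm hi hv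
    obtain ⟨h1, h2, h3, h4⟩ := vert_range v
    simp only [Finset.mem_coe, Finset.mem_range]
    split <;> omega
  · intro u hu v hv hg
    have hcu := mem_bag_char hm hi hu
    have hcv := mem_bag_char hm hi hv
    obtain ⟨h1, h2, h3, h4⟩ := vert_range u
    obtain ⟨g1, g2, g3, g4⟩ := vert_range v
    simp only at hg
    have hxy : u.1.1 = v.1.1 ∧ u.1.2 = v.1.2 := by
      by_cases hi0 : i = 0
      · have hu2 : u.1.2 = y + 1 := by rcases hcu with ⟨h,_⟩|⟨_,h,_⟩ <;> omega
        have hv2 : v.1.2 = y + 1 := by rcases hcv with ⟨h,_⟩|⟨_,h,_⟩ <;> omega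
        rw [if_pos (Or.inr hi0), if_pos (Or.inr hi0)] at hg
        omega
      · rcases hcu with ⟨hu2, hu3⟩|⟨hu2, hu3, hu4⟩ <;>
          rcases hcv with ⟨hv2, hv3⟩|⟨hv2, hv3, hv4⟩
        all_goals first
          | (rw [if_neg (by omega), if_neg (by omega)] at hg; omega)
          | (rw [if_neg (by omega), if_pos (by omega)] at hg; omega)
          | (rw [if_pos (by omega), if_neg (by omega)] at hg; omega)
          | (rw [if_pos (by omega), if_pos (by omega)] at hg; omega)
    exact Subtype.ext (Prod.ext hxy.1 hxy.2)

end BagCard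

section Lower

variable {k : ℕ}

open Classical in
/-- boundary at time `s` w.r.t. placement order `e` -/
noncomputable def Bd (k : ℕ) (e : GkVert k → ℕ) (s : ℕ) : Finset (GkVert k) :=
  Finset.univ.filter (fun u => e u ≤ s ∧ ∃ w, (Gk k).Adj u w ∧ s < e w)

open Classical in
lemma mem_Bd {e : GkVert k → ℕ} {s : ℕ} {u : GkVert k} :
    u ∈ Bd k e s ↔ e u ≤ s ∧ ∃ w, (Gk k).Adj u w ∧ s < e w := by
  simp [Bd]

def colF (k c : ℕ) : Finset (GkVert k) := Finset.univ.filter (fun v => v.1.2 = c)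
def rowF (k r : ℕ) : Finset (GkVert k) := Finset.univ.filter (fun v => v.1.1 = r)

lemma mem_colF {c : ℕ} {v : GkVert k} : v ∈ colF k c ↔ v.1.2 = c := by simp [colF]
lemma mem_rowF {r : ℕ} {v : GkVert k} : v ∈ rowF k r ↔ v.1.1 = r := by simp [rowF]

lemma eq_of_coords {u v : GkVert k} (h1 : u.1.1 = v.1.1) (h2 : u.1.2 = v.1.2) : u = v :=
  Subtype.ext (Prod.ext h1 h2)

lemma card_le_of_proj {α : Type*} (s : Finset α) (t : Finset ℕ) (f : α → ℕ)
    (h : ∀ r ∈ t, ∃ u ∈ s, f u = r) : t.card ≤ s.card :=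
  Finset.card_le_card_of_surjOn f (fun r hr => by
    obtain ⟨u, hu, he⟩ := h r hr; exact ⟨u, hu, he⟩)

/-- a row with a placed and an unplaced vertex contains a boundary vertex -/
lemma row_boundary (e : GkVert k → ℕ) (s r : ℕ) (hr1 : 1 ≤ r) (hrk : r ≤ k)
    (hp : ∃ v : GkVert k, v.1.1 = r ∧ e v ≤ s) (hu : ∃ v : GkVert k, v.1.1 = r ∧ s < e v) :
    ∃ u ∈ Bd k e s, u.1.1 = r := by
  classical
  obtain ⟨va, hva, hea⟩ := hp
  obtain ⟨vb, hvb, heb⟩ := hu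
  set P : ℕ → Prop := fun y => ∃ v : GkVert k, v.1.1 = r ∧ v.1.2 = y ∧ e v ≤ s with hP
  have hra := vert_range va
  have hrb := vert_range vb
  have hPa : P va.1.2 := ⟨va, hva, rfl, hea⟩
  have hPb : ¬ P vb.1.2 := by
    rintro ⟨v, hv1, hv2, hv3⟩
    have : v = vb := eq_of_coords (by omega) hv2
    rw [this] at hv3; omega
  rcases Nat.lt_or_ge va.1.2 vb.1.2 with hlt | hge
  · obtain ⟨m, hm1, hm2, hm3, hm4⟩ := flipNat P (le_of_lt hlt) hPa hPb
    obtain ⟨w, hw1, hw2, hw3⟩ := hm3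
    refine ⟨w, mem_Bd.mpr ⟨hw3, mkV r (m+1) (by omega), ?_, ?_⟩, hw1⟩
    · exact adj_horiz (by simp only [mkV_fst, mkV_snd]; omega) (by omega) (by simp only [mkV_fst, mkV_snd]; omega)
    · by_contra hc
      exact hm4 ⟨mkV r (m+1) (by omega), rfl, rfl, by omega⟩
  · have hab : va.1.2 ≠ vb.1.2 := fun h => hPb (h ▸ hPa)
    have hlt : vb.1.2 < va.1.2 := by omega
    obtain ⟨m, hm1, hm2, hm3, hm4⟩ := flipNat (fun y => ¬ P y) (le_of_lt hlt) hPb (not_not.mpr hPa)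
    obtain ⟨w, hw1, hw2, hw3⟩ := not_not.mp hm4
    refine ⟨w, mem_Bd.mpr ⟨hw3, mkV r m (by omega), ?_, ?_⟩, hw1⟩
    · exact (adj_horiz (u := mkV r m (by omega)) (by simp only [mkV_fst, mkV_snd]; omega)
        (by simp only [mkV_fst, mkV_snd]; omega) (by simp only [mkV_fst, mkV_snd]; omega)).symm
    · by_contra hc
      exact hm3 ⟨mkV r m (by omega), rfl, rfl, by omega⟩

/-- a column with a placed and an unplaced vertex contains a boundary vertex -/
lemma col_boundary (e : GkVert k → ℕ) (s c : ℕ)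
    (hp : ∃ v : GkVert k, v.1.2 = c ∧ e v ≤ s) (hu : ∃ v : GkVert k, v.1.2 = c ∧ s < e v) :
    ∃ u ∈ Bd k e s, u.1.2 = c := by
  classical
  obtain ⟨va, hva, hea⟩ := hp
  obtain ⟨vb, hvb, heb⟩ := hu
  set P : ℕ → Prop := fun x => ∃ v : GkVert k, v.1.1 = x ∧ v.1.2 = c ∧ e v ≤ s with hP
  have hra := vert_range va
  have hrb := vert_range vb
  have hPa : P va.1.1 := ⟨va, rfl, hva, hea⟩
  have hPb : ¬ P vb.1.1 := by
    rintro ⟨v, hv1, hv2, hv3⟩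
    have : v = vb := eq_of_coords hv1 (by omega)
    rw [this] at hv3; omega
  rcases Nat.lt_or_ge va.1.1 vb.1.1 with hlt | hge
  · obtain ⟨m, hm1, hm2, hm3, hm4⟩ := flipNat P (le_of_lt hlt) hPa hPb
    obtain ⟨w, hw1, hw2, hw3⟩ := hm3
    refine ⟨w, mem_Bd.mpr ⟨hw3, mkV (m+1) c (by omega), ?_, ?_⟩, hw2⟩
    · exact adj_vert (by simp only [mkV_fst, mkV_snd]; omega) (by simp only [mkV_fst, mkV_snd]; omega)
    · by_contra hc
      exact hm4 ⟨mkV (m+1) c (by omega), rfl, rfl, by omega⟩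
  · have hab : va.1.1 ≠ vb.1.1 := fun h => hPb (h ▸ hPa)
    have hlt : vb.1.1 < va.1.1 := by omega
    obtain ⟨m, hm1, hm2, hm3, hm4⟩ := flipNat (fun x => ¬ P x) (le_of_lt hlt) hPb (not_not.mpr hPa)
    obtain ⟨w, hw1, hw2, hw3⟩ := not_not.mp hm4
    refine ⟨w, mem_Bd.mpr ⟨hw3, mkV m c (by omega), ?_, ?_⟩, hw2⟩
    · exact (adj_vert (u := mkV m c (by omega)) (by simp only [mkV_fst, mkV_snd]; omega) (by simp only [mkV_fst, mkV_snd]; omega)).symm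
    · by_contra hc
      exact hm3 ⟨mkV m c (by omega), rfl, rfl, by omega⟩

end Lower

section Core

variable {k : ℕ}

lemma core (hk : 1 ≤ k) (e : GkVert k → ℕ) (einj : Function.Injective e)
    (hbd : ∀ s : ℕ, (∃ v : GkVert k, s < e v) → (Bd k e s).card ≤ k) : False := by
  classical
  -- per-column argmax function
  have hMex : ∀ c : ℕ, ∃ v : GkVert k, 1 ≤ c → c ≤ 3*k+6 →
      (v.1.2 = c ∧ ∀ u : GkVert k, u.1.2 = c → e u ≤ e v) := by
    intro c
    by_cases h : 1 ≤ c ∧ c ≤ 3*k+6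
    · obtain ⟨v, hv1, hv2⟩ := Finset.exists_mem_eq_sup (colF k c)
        ⟨mkV 1 c (by omega), mem_colF.mpr rfl⟩ e
      refine ⟨v, fun _ _ => ⟨mem_colF.mp hv1, fun u hu => ?_⟩⟩
      rw [← hv2]
      exact Finset.le_sup (mem_colF.mpr hu)
    · exact ⟨mkV 1 1 (by omega), fun h1 h2 => absurd ⟨h1, h2⟩ h⟩
  choose M hM using hMex
  -- per-row argmax function
  have hRex : ∀ r : ℕ, ∃ v : GkVert k, 1 ≤ r → r ≤ k+2 →
      (v.1.1 = r ∧ ∀ u : GkVert k, u.1.1 = r → e u ≤ e v) := by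
    intro r
    by_cases h : 1 ≤ r ∧ r ≤ k+2
    · obtain ⟨v, hv1, hv2⟩ := Finset.exists_mem_eq_sup (rowF k r)
        ⟨mkV r 1 (by omega), mem_rowF.mpr rfl⟩ e
      refine ⟨v, fun _ _ => ⟨mem_rowF.mp hv1, fun u hu => ?_⟩⟩
      rw [← hv2]
      exact Finset.le_sup (mem_rowF.mpr hu)
    · exact ⟨mkV 1 1 (by omega), fun h1 h2 => absurd ⟨h1, h2⟩ h⟩
  choose R hR using hRex
  -- t1 and the first full column c
  obtain ⟨c, hcmem, hcmin⟩ : ∃ c ∈ Finset.Icc 1 (3*k+6),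
      ∀ c' ∈ Finset.Icc 1 (3*k+6), e (M c) ≤ e (M c') := by
    obtain ⟨c, h1, h2⟩ := Finset.exists_min_image (Finset.Icc 1 (3*k+6))
      (fun c => e (M c)) ⟨1, Finset.mem_Icc.mpr ⟨le_refl 1, by omega⟩⟩
    exact ⟨c, h1, h2⟩
  rw [Finset.mem_Icc] at hcmem
  obtain ⟨hMc, hMcmax⟩ := hM c hcmem.1 hcmem.2
  -- T and the first full row r₀ (among rows 1..k)
  obtain ⟨r₀, hrmem, hrmin⟩ : ∃ r ∈ Finset.Icc 1 k,
      ∀ r' ∈ Finset.Icc 1 k, e (R r) ≤ e (R r') := by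
    obtain ⟨r, h1, h2⟩ := Finset.exists_min_image (Finset.Icc 1 k)
      (fun r => e (R r)) ⟨1, Finset.mem_Icc.mpr ⟨le_refl 1, hk⟩⟩
    exact ⟨r, h1, h2⟩
  rw [Finset.mem_Icc] at hrmem
  obtain ⟨hRr, hRrmax⟩ := hR r₀ hrmem.1 (by omega)
  -- notation
  set t1 := e (M c) with ht1def
  set T := e (R r₀) with hTdef
  -- column c is full at t1
  have hcfull : ∀ v : GkVert k, v.1.2 = c → e v ≤ t1 := hMcmax
  -- F1 : every other column has an unplaced vertex at time t1
  have F1 : ∀ c', 1 ≤ c' → c' ≤ 3*k+6 → c' ≠ c → ∃ v : GkVert k, v.1.2 = c' ∧ t1 < e v := by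
    intro c' h1 h2 hne
    obtain ⟨hMc', hMc'max⟩ := hM c' h1 h2
    refine ⟨M c', hMc', ?_⟩
    have hle : t1 ≤ e (M c') := hcmin c' (Finset.mem_Icc.mpr ⟨h1, h2⟩)
    rcases Nat.lt_or_ge t1 (e (M c')) with h | h
    · exact h
    · exfalso
      have heq : e (M c') = t1 := by omega
      have : M c' = M c := einj heq
      rw [this] at hMc'
      rw [hMc] at hMc'
      exact hne hMc'.symm
  -- rows 1..k are not full before time T
  have hrownotfull : ∀ r, 1 ≤ r → r ≤ k → ∀ s, s < T → ∃ v : GkVert k, v.1.1 = r ∧ s < e v := by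
    intro r h1 h2 s hs
    obtain ⟨hRr', hRr'max⟩ := hR r h1 (by omega)
    have : T ≤ e (R r) := hrmin r (Finset.mem_Icc.mpr ⟨h1, h2⟩)
    exact ⟨R r, hRr', by omega⟩
  -- there is always an unplaced vertex at time t1
  have hunpl_t1 : ∃ v : GkVert k, t1 < e v := by
    rcases Nat.lt_or_ge c 2 with h | h
    · obtain ⟨v, _, hv⟩ := F1 2 (by omega) (by omega) (by omega)
      exact ⟨v, hv⟩
    · obtain ⟨v, _, hv⟩ := F1 1 (by omega) (by omega) (by omega)
      exact ⟨v, hv⟩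
  -- F2 (star) : for t1 ≤ s < T, all boundary vertices lie in rows 1..k
  have F2 : ∀ s, t1 ≤ s → s < T → ∀ u ∈ Bd k e s, u.1.1 ≤ k := by
    intro s hs1 hs2 u hu
    by_contra hcon
    have hcount : ∀ r ∈ Finset.Icc 1 k, ∃ u' ∈ (Bd k e s).erase u,
        (fun z : GkVert k => z.1.1) u' = r := by
      intro r hr
      rw [Finset.mem_Icc] at hr
      have hplaced : ∃ v : GkVert k, v.1.1 = r ∧ e v ≤ s :=
        ⟨mkV r c (by omega), rfl, le_trans (hcfull (mkV r c (by omega)) rfl) hs1⟩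
      obtain ⟨b, hb1, hb2⟩ := row_boundary e s r hr.1 hr.2 hplaced
        (hrownotfull r hr.1 hr.2 s hs2)
      refine ⟨b, Finset.mem_erase.mpr ⟨?_, hb1⟩, hb2⟩
      intro hbe
      rw [hbe] at hb2
      omega
    have h1 : (Finset.Icc 1 k).card ≤ ((Bd k e s).erase u).card :=
      card_le_of_proj _ _ _ hcount
    rw [Nat.card_Icc] at h1
    have h2 : ((Bd k e s).erase u).card = (Bd k e s).card - 1 :=
      Finset.card_erase_of_mem hu
    have h3 : (Bd k e s).card ≤ k := by
      apply hbd
      obtain ⟨v, _, hv⟩ := hrownotfull 1 (le_refl 1) hk s hs2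
      exact ⟨v, hv⟩
    have h4 : 1 ≤ (Bd k e s).card := Finset.card_pos.mpr ⟨u, hu⟩
    omega
  -- F3 : a pendant vertex placed before T is placed by t1
  have F3 : ∀ v : GkVert k, k + 1 ≤ v.1.1 → e v < T → e v ≤ t1 := by
    intro v hv hvT
    by_contra hcon
    push_neg at hcon
    have hrv := vert_range v
    have hnb : ∀ w : GkVert k, (Gk k).Adj v w → e w ≤ e v := by
      intro w hw
      by_contra hw2
      push_neg at hw2
      have hmem : v ∈ Bd k e (e v) := mem_Bd.mpr ⟨le_refl _, w, hw, hw2⟩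
      have := F2 (e v) (by omega) (by omega) v hmem
      omega
    rcases Nat.lt_or_ge v.1.1 (k+2) with hx | hx
    · -- v is in row k+1 ; its pendant neighbour below is (k+2, col)
      have hadj : (Gk k).Adj v (mkV (k+2) v.1.2 (by omega)) :=
        adj_vert (by simp only [mkV_fst]; omega) (by simp only [mkV_snd])
      have hle : e (mkV (k+2) v.1.2 (by omega)) ≤ e v := hnb _ hadj
      have hne : (mkV (k+2) v.1.2 (by omega) : GkVert k) ≠ v := by
        intro h
        have := congrArg (fun z : GkVert k => z.1.1) h
        simp only [mkV_fst] at this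
        omega
      have hlt : e (mkV (k+2) v.1.2 (by omega)) < e v :=
        lt_of_le_of_ne hle (fun h => hne (einj h))
      have hmem : (mkV (k+2) v.1.2 (by omega) : GkVert k) ∈ Bd k e (e v - 1) :=
        mem_Bd.mpr ⟨by omega, v, hadj.symm, by omega⟩
      have := F2 (e v - 1) (by omega) (by omega) _ hmem
      simp only [mkV_fst] at this
      omega
    · -- v is in row k+2 ; its neighbour above is (k+1, col)
      have hadj : (Gk k).Adj (mkV (k+1) v.1.2 (by omega)) v :=
        adj_vert (by simp only [mkV_fst]; omega) (by simp only [mkV_snd])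
      have hle : e (mkV (k+1) v.1.2 (by omega)) ≤ e v := hnb _ hadj.symm
      have hne : (mkV (k+1) v.1.2 (by omega) : GkVert k) ≠ v := by
        intro h
        have := congrArg (fun z : GkVert k => z.1.1) h
        simp only [mkV_fst] at this
        omega
      have hlt : e (mkV (k+1) v.1.2 (by omega)) < e v :=
        lt_of_le_of_ne hle (fun h => hne (einj h))
      have hmem : (mkV (k+1) v.1.2 (by omega) : GkVert k) ∈ Bd k e (e v - 1) :=
        mem_Bd.mpr ⟨by omega, v, hadj, by omega⟩
      have := F2 (e v - 1) (by omega) (by omega) _ hmem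
      simp only [mkV_fst] at this
      omega
  -- the vertex placed exactly at time T lies in rows 1..k
  have hTrow : ∀ v : GkVert k, e v = T → v.1.1 ≤ k := by
    intro v hv
    have : v = R r₀ := einj (by rw [hv])
    rw [this, hRr]
    exact hrmem.2
  -- F4 : at least k+2 columns are full at time T
  have F4 : k + 2 ≤ ((Finset.Icc 1 (3*k+6)).filter
      (fun c' => ∀ v : GkVert k, v.1.2 = c' → e v ≤ T)).card := by
    set FullT := (Finset.Icc 1 (3*k+6)).filter
      (fun c' => ∀ v : GkVert k, v.1.2 = c' → e v ≤ T) with hFullTdef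
    set NotFull := (Finset.Icc 1 (3*k+6)).filter
      (fun c' => ¬ ∀ v : GkVert k, v.1.2 = c' → e v ≤ T) with hNotFulldef
    have hsum : FullT.card + NotFull.card = 3*k+6 := by
      rw [hFullTdef, hNotFulldef, Finset.card_filter_add_card_filter_not,
        Nat.card_Icc]
      omega
    rcases Finset.eq_empty_or_nonempty NotFull with hemp | hne
    · rw [hemp] at hsum
      simp at hsum
      omega
    · have hbdT : (Bd k e T).card ≤ k := by
        apply hbd
        obtain ⟨c0, hc0⟩ := hne
        rw [hNotFulldef, Finset.mem_filter] at hc0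
        push_neg at hc0
        obtain ⟨v, _, hv⟩ := hc0.2
        exact ⟨v, by omega⟩
      have hcount : ∀ c' ∈ NotFull, ∃ u ∈ Bd k e T,
          (fun z : GkVert k => z.1.2) u = c' := by
        intro c' hc'
        rw [hNotFulldef, Finset.mem_filter, Finset.mem_Icc] at hc'
        obtain ⟨⟨h1, h2⟩, h3⟩ := hc'
        push_neg at h3
        obtain ⟨v, hv1, hv2⟩ := h3
        apply col_boundary
        · exact ⟨mkV r₀ c' (by omega), rfl, hRrmax _ rfl⟩
        · exact ⟨v, hv1, by omega⟩
      have h1 : NotFull.card ≤ (Bd k e T).card := card_le_of_proj _ _ _ hcount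
      omega
  -- F5 : final contradiction
  set FullT := (Finset.Icc 1 (3*k+6)).filter
    (fun c' => ∀ v : GkVert k, v.1.2 = c' → e v ≤ T) with hFullTdef
  have hcS : k + 1 ≤ (FullT.erase c).card := by
    by_cases h : c ∈ FullT
    · have h2 : (FullT.erase c).card = FullT.card - 1 := Finset.card_erase_of_mem h
      omega
    · rw [Finset.erase_eq_of_notMem h]
      omega
  have hcount : ∀ c' ∈ FullT.erase c, ∃ u ∈ Bd k e t1,
      (fun z : GkVert k => z.1.2) u = c' := by
    intro c' hc'
    rw [Finset.mem_erase, hFullTdef, Finset.mem_filter, Finset.mem_Icc] at hc'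
    obtain ⟨hne, ⟨h1, h2⟩, h3⟩ := hc'
    apply col_boundary
    · -- the pendant (k+1, c') is placed by t1
      have hwT : e (mkV (k+1) c' (by omega) : GkVert k) ≤ T := h3 _ rfl
      have hwneT : e (mkV (k+1) c' (by omega) : GkVert k) ≠ T := by
        intro h
        have := hTrow _ h
        simp only [mkV_fst] at this
        omega
      have : e (mkV (k+1) c' (by omega) : GkVert k) ≤ t1 :=
        F3 _ (by simp only [mkV_fst]; omega) (by omega)
      exact ⟨_, mkV_snd (k+1) c' _, this⟩
    · exact F1 c' h1 h2 hne
  have h1 : (FullT.erase c).card ≤ (Bd k e t1).card := card_le_of_proj _ _ _ hcount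
  have h2 : (Bd k e t1).card ≤ k := hbd t1 hunpl_t1
  omega

end Core

section Bridge

variable {k : ℕ}

lemma bridge {n : ℕ} (hk : 1 ≤ k) (B : Fin n → Finset (GkVert k))
    (hB : IsPathDecomp (Gk k) n B) (hcard : ∀ i, (B i).card ≤ k + 1) : False := by
  classical
  obtain ⟨hcover, hedge, hinterval⟩ := hB
  set N := Fintype.card (GkVert k) with hN
  have hNpos : 0 < N := Fintype.card_pos_iff.mpr ⟨mkV 1 1 (by omega)⟩
  set idx := Fintype.equivFin (GkVert k) with hidx
  -- minimal bag of each vertex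
  have hSne : ∀ v : GkVert k, (Finset.univ.filter (fun i => v ∈ B i)).Nonempty := by
    intro v
    obtain ⟨i, hi⟩ := hcover v
    exact ⟨i, by simp [hi]⟩
  set f : GkVert k → Fin n := fun v => (Finset.univ.filter (fun i => v ∈ B i)).min' (hSne v)
    with hf
  have hfmem : ∀ v, v ∈ B (f v) := by
    intro v
    have := (Finset.univ.filter (fun i => v ∈ B i)).min'_mem (hSne v)
    simpa using this
  have hfmin : ∀ v (j : Fin n), v ∈ B j → f v ≤ j := by
    intro v j hj
    exact Finset.min'_le _ _ (by simp [hj])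
  set e : GkVert k → ℕ := fun v => N * (f v).val + (idx v).val with he
  have hmono : ∀ u v : GkVert k, e u ≤ e v → f u ≤ f v := by
    intro u v h
    by_contra hc
    push_neg at hc
    rw [Fin.lt_def] at hc
    have h1 : (f v).val + 1 ≤ (f u).val := hc
    have h2 := Nat.mul_le_mul_left N h1
    rw [Nat.mul_succ] at h2
    have h3 := (idx u).isLt
    have h4 := (idx v).isLt
    simp only [he] at h
    omega
  have einj : Function.Injective e := by
    intro u v h
    simp only [he] at h
    have h3 := (idx u).isLt
    have h4 := (idx v).isLt
    have hfe : f u = f v := le_antisymm (hmono u v (le_of_eq h)) (hmono v u (le_of_eq h.symm))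
    have : (idx u).val = (idx v).val := by
      rw [hfe] at h
      omega
    exact idx.injective (Fin.ext this)
  have hbd : ∀ s : ℕ, (∃ v : GkVert k, s < e v) → (Bd k e s).card ≤ k := by
    intro s hex
    obtain ⟨v0, hv0⟩ := hex
    obtain ⟨w, hwU, hwmin⟩ := Finset.exists_min_image
      (Finset.univ.filter (fun v : GkVert k => s < e v)) e ⟨v0, by simp [hv0]⟩
    rw [Finset.mem_filter] at hwU
    have hsub : Bd k e s ⊆ (B (f w)).erase w := by
      intro u hu
      rw [mem_Bd] at hu
      obtain ⟨hus, x, hadj, hxs⟩ := hu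
      rw [Finset.mem_erase]
      constructor
      · intro h
        rw [h] at hus
        omega
      · obtain ⟨j, huj, hxj⟩ := hedge u x hadj
        have h1 : f u ≤ f w := hmono u w (by omega)
        have h2 : f w ≤ f x := hmono w x (hwmin x (by simp [hxs]))
        have h3 : f x ≤ j := hfmin x j hxj
        exact hinterval u (f u) (f w) j h1 (le_trans h2 h3) (hfmem u) huj
    calc (Bd k e s).card ≤ ((B (f w)).erase w).card := Finset.card_le_card hsub
      _ = (B (f w)).card - 1 := Finset.card_erase_of_mem (hfmem w)
      _ ≤ k := by have := hcard (f w); omega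
  exact core hk e einj hbd

end Bridge


theorem stmt3 (k : ℕ) (hk : 1 ≤ k) : pathwidth (Gk k) = k + 1 := by
  have hmem : (k+1) ∈ {w | ∃ (n : ℕ) (B : Fin n → Finset (GkVert k)),
      IsPathDecomp (Gk k) n B ∧ ∀ i, (B i).card ≤ w + 1} := by
    refine ⟨(3*k+6) * (k+1), Bag k ((3*k+6)*(k+1)), upper_decomp, fun i => ?_⟩
    have := bag_card (k := k) i
    omega
  unfold pathwidth
  apply le_antisymm
  · exact Nat.sInf_le hmem
  · apply le_csInf ⟨k+1, hmem⟩
    rintro w ⟨n, B, hd, hb⟩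
    by_contra hcon
    push_neg at hcon
    exact bridge hk B hd (fun i => le_trans (hb i) (by omega))
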